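/- Let R ∈ ℝ^{n×n} be symmetric positive definite, let v₁, …, vₙ ∈ ℝⁿ be R-orthonormal (vᵢᵀ R vⱼ = δᵢⱼ), and let H_M ∈ ℝ^{n×n} and λ₁, …, λₙ ∈ ℝ satisfy H_M vⱼ = λⱼ R vⱼ with λⱼ ≥ 0 for each j. Let V ∈ ℝ^{n×n} have columns v₁, …, vₙ and let Γ ∈ ℝ^{n×n} be the diagonal matrix with entries λⱼ/(1 + λⱼ). Then H_M + R is invertible and (H_M + R)⁻¹ = R⁻¹ − V Γ Vᵀ. -/

import Mathlib

open Matrix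

theorem stmt14 {n : ℕ} (R HM : Matrix (Fin n) (Fin n) ℝ) (hR : R.PosDef)
    (v : Fin n → Fin n → ℝ)
    (horth : ∀ i j, v i ⬝ᵥ R.mulVec (v j) = if i = j then (1:ℝ) else 0)
    (lam : Fin n → ℝ) (hlam : ∀ j, 0 ≤ lam j)
    (heig : ∀ j, HM.mulVec (v j) = lam j • R.mulVec (v j))
    -- `V` is the matrix whose j-th column is `v j`, `Γ = diag(λⱼ/(1+λⱼ))`
    (V Γ : Matrix (Fin n) (Fin n) ℝ)
    (hV : V = Matrix.of fun i j => v j i)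
    (hΓ : Γ = Matrix.diagonal fun j => lam j / (1 + lam j)) :
    IsUnit (HM + R) ∧ (HM + R)⁻¹ = R⁻¹ - V * Γ * Vᵀ := by
  have hpos : ∀ j, (0:ℝ) < 1 + lam j := fun j => by linarith [hlam j]
  have hne : ∀ j, (1:ℝ) + lam j ≠ 0 := fun j => (hpos j).ne'
  -- Vᵀ R V = 1
  have h1 : Vᵀ * R * V = 1 := by
    ext i j
    have := horth i j
    simp only [Matrix.mul_apply, Matrix.transpose_apply, hV, Matrix.of_apply,
      Matrix.one_apply]
    rw [← this]
    simp only [dotProduct, Matrix.mulVec, Finset.sum_mul, Finset.mul_sum]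
    rw [Finset.sum_comm]
    exact Finset.sum_congr rfl fun x _ => Finset.sum_congr rfl fun y _ => by ring
  have h2 : V * (Vᵀ * R) = 1 := by
    rw [mul_eq_one_comm]; exact h1
  have h3 : R * (V * Vᵀ) = 1 := by
    rw [mul_eq_one_comm]
    rw [Matrix.mul_assoc]; exact h2
  -- HM * V = R * V * Λ
  set Λ : Matrix (Fin n) (Fin n) ℝ := Matrix.diagonal lam with hΛ
  have h4 : HM * V = R * V * Λ := by
    ext i j
    rw [hΛ, Matrix.mul_diagonal]
    have := congrFun (heig j) i
    simp only [Matrix.mulVec, dotProduct, Pi.smul_apply, smul_eq_mul] at this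
    simp only [Matrix.mul_apply, hV, Matrix.of_apply]
    rw [this, mul_comm]
  have h5 : HM = R * V * Λ * (Vᵀ * R) := by
    calc HM = HM * (V * (Vᵀ * R)) := by rw [h2, Matrix.mul_one]
    _ = (HM * V) * (Vᵀ * R) := by rw [Matrix.mul_assoc]
    _ = R * V * Λ * (Vᵀ * R) := by rw [h4]
  have h6 : HM + R = R * V * (Λ + 1) * (Vᵀ * R) := by
    rw [Matrix.mul_add, Matrix.add_mul, Matrix.mul_one, ← h5]
    congr 1
    rw [Matrix.mul_assoc, h2, Matrix.mul_one]
  set D : Matrix (Fin n) (Fin n) ℝ := Matrix.diagonal (fun j => (1 + lam j)⁻¹) with hD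
  have hΛD : (Λ + 1) * D = 1 := by
    have hfun : (fun i => (lam i + 1) * (1 + lam i)⁻¹) = fun _ => (1:ℝ) :=
      funext fun j => by rw [add_comm (lam j) 1, mul_inv_cancel₀ (hne j)]
    rw [hΛ, hD, ← Matrix.diagonal_one, Matrix.diagonal_add, Matrix.diagonal_mul_diagonal,
      hfun, Matrix.diagonal_one]
  -- candidate inverse
  have hinv : (HM + R) * (V * D * Vᵀ) = 1 := by
    rw [h6]
    calc R * V * (Λ + 1) * (Vᵀ * R) * (V * D * Vᵀ)
        = R * V * (Λ + 1) * ((Vᵀ * R * V) * D * Vᵀ) := by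
          simp only [Matrix.mul_assoc]
      _ = R * V * ((Λ + 1) * D) * Vᵀ := by rw [h1, Matrix.one_mul, ← Matrix.mul_assoc,
          ← Matrix.mul_assoc]
      _ = R * (V * Vᵀ) := by rw [hΛD, Matrix.mul_one, Matrix.mul_assoc]
      _ = 1 := h3
  have hU : IsUnit (HM + R) := IsUnit.of_mul_eq_one _ hinv
  refine ⟨hU, ?_⟩
  rw [Matrix.inv_eq_right_inv hinv]
  have hRinv : R⁻¹ = V * Vᵀ := Matrix.inv_eq_right_inv h3
  have hDG : D = 1 - Γ := by
    have hfun : (fun j => (1 + lam j)⁻¹) = fun i => (1:ℝ) - lam i / (1 + lam i) :=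
      funext fun j => by field_simp [hne j]; ring
    rw [hD, hΓ, ← Matrix.diagonal_one, Matrix.diagonal_sub, hfun]
  rw [hRinv, hDG, Matrix.mul_sub, Matrix.mul_one, Matrix.sub_mul]
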